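/- Let κ be an uncountable regular cardinal and M a module admitting a κ-filtration ⟨M_α | α < κ⟩ such that each M_{α+1} lies in Add(X) and the set E = {α < κ : M_α is not a direct summand of M} is non-stationary in κ. Then M ∈ Add(X). -/

import Mathlib

open DirectSum

/-- `N` belongs to `Add(X)`: it is isomorphic to a direct summand of a direct sum of
copies of `X`. -/
def InAdd (R : Type u) [Ring R] (X : Type u) [AddCommGroup X] [Module R X]
    (N : Type u) [AddCommGroup N] [Module R N] : Prop :=
  ∃ (ι : Type u) (f : N →ₗ[R] (ι →₀ X)) (g : (ι →₀ X) →ₗ[R] N),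
    g.comp f = LinearMap.id

/-- `C` is a club in the limit ordinal `o`. -/
def IsClubIn (C : Set Ordinal.{u}) (o : Ordinal.{u}) : Prop :=
  C ⊆ Set.Iio o ∧
  (∀ A : Set Ordinal.{u}, A ⊆ C → A.Nonempty → sSup A < o → sSup A ∈ C) ∧
  (∀ α < o, ∃ β ∈ C, α ≤ β)

/-- `S` is stationary in `o`: it meets every club in `o`. -/
def IsStationaryIn (S : Set Ordinal.{u}) (o : Ordinal.{u}) : Prop :=
  ∀ C : Set Ordinal.{u}, IsClubIn C o → (S ∩ C).Nonempty

section Aux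
universe u
variable {R : Type u} [Ring R] {X : Type u} [AddCommGroup X] [Module R X]

theorem inAdd_of_split {N P : Type u} [AddCommGroup N] [Module R N]
    [AddCommGroup P] [Module R P] (h : InAdd R X N)
    (f : P →ₗ[R] N) (g : N →ₗ[R] P) (hfg : g.comp f = LinearMap.id) :
    InAdd R X P := by
  obtain ⟨ι, F, G, hFG⟩ := h
  refine ⟨ι, F.comp f, g.comp G, LinearMap.ext fun x => ?_⟩
  have h1 := LinearMap.congr_fun hFG (f x)
  have h2 := LinearMap.congr_fun hfg x
  simp only [LinearMap.comp_apply, LinearMap.id_apply] at h1 h2 ⊢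
  rw [h1, h2]

theorem inAdd_of_isCompl {M : Type u} [AddCommGroup M] [Module R M]
    {P Q W : Submodule R M} (hc : IsCompl P Q) (hPW : P ≤ W)
    (hW : InAdd R X W) : InAdd R X P := by
  refine inAdd_of_split hW (Submodule.inclusion hPW)
    ((P.linearProjOfIsCompl Q hc).comp W.subtype) (LinearMap.ext fun x => ?_)
  have : (W.subtype (Submodule.inclusion hPW x) : M) = (x : M) := rfl
  simp only [LinearMap.comp_apply, LinearMap.id_apply, this]
  exact Submodule.linearProjOfIsCompl_apply_left hc x

theorem inAdd_dfinsupp {ι : Type u} (A : ι → Type u) [∀ i, AddCommGroup (A i)]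
    [∀ i, Module R (A i)] (h : ∀ i, InAdd R X (A i)) :
    InAdd R X (Π₀ i, A i) := by
  choose κi f g hfg using h
  refine ⟨Σ i, κi i,
    (sigmaFinsuppLequivDFinsupp (R := R)).symm.toLinearMap.comp (DFinsupp.mapRange.linearMap f),
    (DFinsupp.mapRange.linearMap g).comp (sigmaFinsuppLequivDFinsupp (R := R)).toLinearMap,
    LinearMap.ext fun x => ?_⟩
  simp only [LinearMap.comp_apply, LinearEquiv.coe_coe, LinearEquiv.apply_symm_apply,
    LinearMap.id_apply]
  have : (DFinsupp.mapRange.linearMap g).comp (DFinsupp.mapRange.linearMap f)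
      = (LinearMap.id : (Π₀ i, A i) →ₗ[R] _) := by
    rw [← DFinsupp.mapRange.linearMap_comp]
    simp_rw [hfg]
    exact DFinsupp.mapRange.linearMap_id
  exact LinearMap.congr_fun this x

theorem inAdd_directSum {ι : Type u} {M : Type u} [AddCommGroup M] [Module R M]
    (A : ι → Submodule R M) (h : ∀ i, InAdd R X (A i)) [DecidableEq ι]
    (hint : DirectSum.IsInternal A) : InAdd R X M := by
  have e : (⨁ i, A i) ≃ₗ[R] M := LinearEquiv.ofBijective (DirectSum.coeLinearMap A) hint
  have h1 : InAdd R X (Π₀ i, A i) := inAdd_dfinsupp (fun i => ↥(A i)) h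
  have h2 : InAdd R X (⨁ i, A i) := h1
  exact inAdd_of_split h2 e.symm.toLinearMap e.toLinearMap (by ext x; simp)

theorem sSupIndep_insert_of_disjoint {α : Type*} [CompleteLattice α] [IsModularLattice α]
    {s : Set α} {a : α} (hs : sSupIndep s) (ha : Disjoint a (sSup s)) :
    sSupIndep (insert a s) := by
  intro b hb
  rcases eq_or_ne b a with rfl | hba
  · refine ha.mono_right (sSup_le_sSup fun x hx => ?_)
    rcases hx.1 with rfl | h
    · exact absurd rfl hx.2
    · exact h
  · have hbs : b ∈ s := hb.resolve_left hba
    have h1 : Disjoint b (sSup (s \ {b})) := hs hbs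
    have h2 : Disjoint (b ⊔ sSup (s \ {b})) a :=
      (ha.symm).mono_left (sup_le (le_sSup hbs) (sSup_le_sSup Set.diff_subset))
    have h3 : Disjoint b (sSup (s \ {b}) ⊔ a) :=
      h1.disjoint_sup_right_of_disjoint_sup_left h2
    refine h3.mono_right ?_
    have hsub : insert a s \ {b} ⊆ insert a (s \ {b}) := by
      rintro x ⟨hx, hxb⟩
      rcases hx with rfl | h
      · exact Set.mem_insert _ _
      · exact Set.mem_insert_of_mem _ ⟨h, hxb⟩
    calc sSup (insert a s \ {b}) ≤ sSup (insert a (s \ {b})) := sSup_le_sSup hsub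
      _ = a ⊔ sSup (s \ {b}) := sSup_insert
      _ = sSup (s \ {b}) ⊔ a := sup_comm _ _

end Aux
/-- If `M` has a `κ`-filtration with successor members in `Add(X)` and the set of stages
which are not direct summands of `M` is non-stationary, then `M ∈ Add(X)`. -/
theorem stmt8
    {R : Type u} [Ring R] {M : Type u} [AddCommGroup M] [Module R M]
    (X : Type u) [AddCommGroup X] [Module R X]
    (κ : Cardinal.{u}) (hκ : κ.IsRegular) (hunc : ℵ₀ < κ)
    (Mfil : Ordinal.{u} → Submodule R M)
    (hmono : ∀ α β : Ordinal.{u}, α ≤ β → β < κ.ord → Mfil α ≤ Mfil β)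
    (hlim : ∀ α : Ordinal.{u}, α < κ.ord → Order.IsSuccLimit α → Mfil α = ⨆ β < α, Mfil β)
    (hunion : ⨆ α : Set.Iio κ.ord, Mfil α.1 = ⊤)
    (hgen : ∀ α < κ.ord, ∃ S : Set M, Cardinal.mk S < κ ∧ Submodule.span R S = Mfil α)
    (hadd : ∀ α < κ.ord, InAdd R X (Mfil (α + 1)))
    (hns : ¬ IsStationaryIn
      {α : Ordinal.{u} | α < κ.ord ∧ ¬ ∃ N' : Submodule R M, IsCompl (Mfil α) N'}
      κ.ord) :
    InAdd R X M := by
  classical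
  have holim : Order.IsSuccLimit κ.ord := Cardinal.isSuccLimit_ord hκ.aleph0_le
  rw [IsStationaryIn] at hns
  push_neg at hns
  obtain ⟨C, ⟨hCsub, hCclosed, hCunb⟩, hCE⟩ := hns
  have hcompl : ∀ c ∈ C, ∃ N', IsCompl (Mfil c) N' := by
    intro c hc
    by_contra h
    push_neg at h
    have hmem : c ∈ ({α | α < κ.ord ∧ ∀ N' : Submodule R M, ¬ IsCompl (Mfil α) N'} ∩ C) :=
      ⟨⟨hCsub hc, h⟩, hc⟩
    rw [hCE] at hmem
    exact hmem
  choose! N hN using hcompl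
  -- next element of the club
  have hsucclt : ∀ c < κ.ord, c + 1 < κ.ord := fun c hc => by
    rw [Ordinal.add_one_eq_succ]; exact holim.succ_lt hc
  have hnxt_ex : ∀ c < κ.ord, (C ∩ Set.Ioi c).Nonempty := by
    intro c hc
    obtain ⟨β, hβC, hβ⟩ := hCunb (c + 1) (hsucclt c hc)
    exact ⟨β, hβC, lt_of_lt_of_le (by rw [Ordinal.add_one_eq_succ]; exact Order.lt_succ c) hβ⟩
  set nxt : Ordinal.{u} → Ordinal.{u} := fun c => sInf (C ∩ Set.Ioi c) with hnxtdef
  have hnxt_mem : ∀ c < κ.ord, nxt c ∈ C ∧ c < nxt c := by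
    intro c hc
    have h := csInf_mem (hnxt_ex c hc)
    exact ⟨h.1, h.2⟩
  have hnxt_le : ∀ c, ∀ d ∈ C, c < d → nxt c ≤ d := fun c d hd hcd =>
    csInf_le (OrderBot.bddBelow _) ⟨hd, hcd⟩
  have hnxt_mono : ∀ c1 c2, c2 < κ.ord → c1 ≤ c2 → nxt c1 ≤ nxt c2 := by
    intro c1 c2 h2 h12
    exact le_csInf (hnxt_ex c2 h2) fun b hb => csInf_le (OrderBot.bddBelow _)
      ⟨hb.1, lt_of_le_of_lt h12 hb.2⟩
  -- minimum of the club
  have hCne : C.Nonempty := by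
    obtain ⟨β, hβ, -⟩ := hCunb 0 holim.pos
    exact ⟨β, hβ⟩
  set c0 := sInf C with hc0def
  have hc0C : c0 ∈ C := csInf_mem hCne
  have hc0le : ∀ c ∈ C, c0 ≤ c := fun c hc => csInf_le (OrderBot.bddBelow _) hc
  -- the pieces
  set K : Ordinal.{u} → Submodule R M := fun c => N c ⊓ Mfil (nxt c) with hKdef
  have hKdisj : ∀ c ∈ C, Disjoint (Mfil c) (K c) := fun c hc =>
    (hN c hc).disjoint.mono_right inf_le_left
  have hKsup : ∀ c ∈ C, Mfil c ⊔ K c = Mfil (nxt c) := by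
    intro c hc
    have h1 : Mfil c ≤ Mfil (nxt c) :=
      hmono _ _ (le_of_lt (hnxt_mem c (hCsub hc)).2) (hCsub (hnxt_mem c (hCsub hc)).1)
    calc Mfil c ⊔ N c ⊓ Mfil (nxt c) = (Mfil c ⊔ N c) ⊓ Mfil (nxt c) :=
          (sup_inf_assoc_of_le _ h1).symm
      _ = Mfil (nxt c) := by rw [(hN c hc).codisjoint.eq_top, top_inf_eq]
  have hSdsub : ∀ e e' : Ordinal.{u}, e ≤ e' →
      (insert (Mfil c0) {P | ∃ c ∈ C, nxt c ≤ e ∧ P = K c} : Set (Submodule R M)) ⊆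
        insert (Mfil c0) {P | ∃ c ∈ C, nxt c ≤ e' ∧ P = K c} := by
    intro e e' hee P hP
    rcases hP with rfl | ⟨c, hcC, hle, rfl⟩
    · exact Set.mem_insert _ _
    · exact Set.mem_insert_of_mem _ ⟨c, hcC, hle.trans hee, rfl⟩
  -- the main transfinite induction
  have main : ∀ d, d ∈ C →
      sSupIndep (insert (Mfil c0) {P | ∃ c ∈ C, nxt c ≤ d ∧ P = K c} : Set (Submodule R M)) ∧
      sSup (insert (Mfil c0) {P | ∃ c ∈ C, nxt c ≤ d ∧ P = K c} : Set (Submodule R M)) = Mfil d := by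
    intro d
    induction d using Ordinal.induction with
    | _ d IH =>
    intro hdC
    have hdo : d < κ.ord := hCsub hdC
    rcases eq_or_ne d c0 with rfl | hd0
    · have hempty : {P | ∃ c ∈ C, nxt c ≤ c0 ∧ P = K c} = (∅ : Set (Submodule R M)) := by
        ext P
        simp only [Set.mem_setOf_eq, Set.mem_empty_iff_false, iff_false, not_exists]
        rintro c ⟨hcC, hle, -⟩
        exact absurd hle (not_le.2 (lt_of_le_of_lt (hc0le c hcC) (hnxt_mem c (hCsub hcC)).2))
      rw [hempty]
      constructor
      · simpa using sSupIndep_singleton (Mfil c0)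
      · simp
    · by_cases hsucc : ∃ c ∈ C, c < d ∧ nxt c = d
      · obtain ⟨c', hc'C, hc'd, hnc'⟩ := hsucc
        obtain ⟨hind, hsup⟩ := IH c' hc'd hc'C
        have hseteq : (insert (Mfil c0) {P | ∃ c ∈ C, nxt c ≤ d ∧ P = K c} : Set (Submodule R M))
            = insert (K c') (insert (Mfil c0) {P | ∃ c ∈ C, nxt c ≤ c' ∧ P = K c}) := by
          ext P
          simp only [Set.mem_insert_iff, Set.mem_setOf_eq]
          constructor
          · rintro (h | ⟨c, hcC, hle, rfl⟩)
            · exact Or.inr (Or.inl h)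
            · rcases eq_or_ne c c' with rfl | hne
              · exact Or.inl rfl
              · have hcd : c < d := lt_of_lt_of_le (hnxt_mem c (hCsub hcC)).2 hle
                have hcc' : c < c' := by
                  rcases lt_or_ge c c' with h | h
                  · exact h
                  · have hlt2 : c' < c := lt_of_le_of_ne h (Ne.symm hne)
                    have := hnxt_le c' c hcC hlt2
                    rw [hnc'] at this
                    exact absurd this (not_le.2 hcd)
                exact Or.inr (Or.inr ⟨c, hcC, hnxt_le c c' hc'C hcc', rfl⟩)
          · rintro (rfl | h | ⟨c, hcC, hle, rfl⟩)
            · exact Or.inr ⟨c', hc'C, le_of_eq hnc', rfl⟩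
            · exact Or.inl h
            · exact Or.inr ⟨c, hcC, hle.trans hc'd.le, rfl⟩
        rw [hseteq]
        have hdisj : Disjoint (K c')
            (sSup (insert (Mfil c0) {P | ∃ c ∈ C, nxt c ≤ c' ∧ P = K c} : Set (Submodule R M))) := by
          rw [hsup]
          exact (hKdisj c' hc'C).symm
        constructor
        · exact sSupIndep_insert_of_disjoint hind hdisj
        · rw [sSup_insert, hsup, sup_comm, hKsup c' hc'C, hnc']
      · push_neg at hsucc
        have hlt : ∀ c ∈ C, c < d → nxt c < d := fun c hc hcd =>
          lt_of_le_of_ne (hnxt_le c d hdC hcd) (hsucc c hc hcd)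
        have hc0d : c0 < d := lt_of_le_of_ne (hc0le d hdC) (Ne.symm hd0)
        have hAne : (C ∩ Set.Iio d).Nonempty := ⟨c0, hc0C, hc0d⟩
        have hAbdd : BddAbove (C ∩ Set.Iio d) := ⟨d, fun x hx => le_of_lt hx.2⟩
        have hsupA : sSup (C ∩ Set.Iio d) = d := by
          refine le_antisymm (csSup_le hAne fun x hx => le_of_lt hx.2) ?_
          by_contra hless
          push_neg at hless
          have hsC : sSup (C ∩ Set.Iio d) ∈ C :=
            hCclosed _ Set.inter_subset_left hAne (lt_trans hless hdo)
          have h1 : nxt (sSup (C ∩ Set.Iio d)) < d := hlt _ hsC hless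
          have h2 : nxt (sSup (C ∩ Set.Iio d)) ∈ C := (hnxt_mem _ (hCsub hsC)).1
          have h3 : nxt (sSup (C ∩ Set.Iio d)) ≤ sSup (C ∩ Set.Iio d) :=
            le_csSup hAbdd ⟨h2, h1⟩
          exact absurd h3 (not_le.2 (hnxt_mem _ (hCsub hsC)).2)
        have hdlim : Order.IsSuccLimit d := by
          refine Ordinal.isSuccLimit_iff.2 ⟨?_, Order.isSuccPrelimit_of_succ_lt ?_⟩
          · exact pos_iff_ne_zero.mp (lt_of_le_of_lt (zero_le (a := c0)) hc0d)
          · intro a ha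
            rw [← hsupA] at ha
            obtain ⟨b, hbA, hab⟩ := (lt_csSup_iff hAbdd hAne).1 ha
            exact lt_of_le_of_lt (Order.succ_le_of_lt hab) hbA.2
        have hMd : Mfil d = ⨆ c' ∈ C ∩ Set.Iio d, Mfil c' := by
          rw [hlim d hdo hdlim]
          apply le_antisymm
          · refine iSup₂_le fun β hβ => ?_
            rw [← hsupA] at hβ
            obtain ⟨b, hbA, hab⟩ := (lt_csSup_iff hAbdd hAne).1 hβ
            exact le_iSup₂_of_le b hbA (hmono β b hab.le (lt_trans hbA.2 hdo))
          · exact iSup₂_le fun c' hc' => le_iSup₂_of_le c' hc'.2 le_rfl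
        have hUnion : (insert (Mfil c0) {P | ∃ c ∈ C, nxt c ≤ d ∧ P = K c} : Set (Submodule R M))
            = ⋃₀ ((fun c' => insert (Mfil c0) {P | ∃ c ∈ C, nxt c ≤ nxt c' ∧ P = K c}) ''
                (C ∩ Set.Iio d)) := by
          ext P
          simp only [Set.sUnion_image, Set.mem_iUnion, Set.mem_insert_iff, Set.mem_setOf_eq,
            exists_prop]
          constructor
          · rintro (rfl | ⟨c, hcC, hle, rfl⟩)
            · exact ⟨c0, ⟨hc0C, hc0d⟩, Or.inl rfl⟩
            · have hcd : c < d := lt_of_lt_of_le (hnxt_mem c (hCsub hcC)).2 hle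
              exact ⟨c, ⟨hcC, hcd⟩, Or.inr ⟨c, hcC, le_rfl, rfl⟩⟩
          · rintro ⟨c', hc'A, (rfl | ⟨c, hcC, hle, rfl⟩)⟩
            · exact Or.inl rfl
            · exact Or.inr ⟨c, hcC, hle.trans (hlt c' hc'A.1 hc'A.2).le, rfl⟩
        have hdir : DirectedOn (· ⊆ ·)
            ((fun c' => insert (Mfil c0) {P | ∃ c ∈ C, nxt c ≤ nxt c' ∧ P = K c} :
              Ordinal.{u} → Set (Submodule R M)) '' (C ∩ Set.Iio d)) := by
          rintro _ ⟨c1, hc1, rfl⟩ _ ⟨c2, hc2, rfl⟩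
          rcases le_total c1 c2 with h | h
          · exact ⟨_, ⟨c2, hc2, rfl⟩,
              hSdsub _ _ (hnxt_mono c1 c2 (lt_trans hc2.2 hdo) h), subset_rfl⟩
          · exact ⟨_, ⟨c1, hc1, rfl⟩, subset_rfl,
              hSdsub _ _ (hnxt_mono c2 c1 (lt_trans hc1.2 hdo) h)⟩
        constructor
        · rw [hUnion]
          refine iSupIndep_sUnion_of_directed hdir ?_
          rintro _ ⟨c', hc', rfl⟩
          exact (IH (nxt c') (hlt c' hc'.1 hc'.2) (hnxt_mem c' (hCsub hc'.1)).1).1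
        · rw [hUnion, sSup_sUnion, hMd]
          apply le_antisymm
          · refine iSup₂_le fun t ht => ?_
            obtain ⟨c', hc', rfl⟩ := ht
            rw [(IH (nxt c') (hlt c' hc'.1 hc'.2) (hnxt_mem c' (hCsub hc'.1)).1).2]
            exact le_iSup₂_of_le (nxt c') ⟨(hnxt_mem c' (hCsub hc'.1)).1, hlt c' hc'.1 hc'.2⟩ le_rfl
          · refine iSup₂_le fun c' hc' => ?_
            refine le_iSup₂_of_le _ ⟨c', hc', rfl⟩ ?_
            rw [(IH (nxt c') (hlt c' hc'.1 hc'.2) (hnxt_mem c' (hCsub hc'.1)).1).2]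
            exact hmono c' (nxt c') (le_of_lt (hnxt_mem c' (hCsub hc'.1)).2)
              (hCsub (hnxt_mem c' (hCsub hc'.1)).1)
  -- the global family
  set SS : Set (Submodule R M) := insert (Mfil c0) {P | ∃ c ∈ C, P = K c} with hSSdef
  have hSSunion : SS = ⋃₀ ((fun d => insert (Mfil c0) {P | ∃ c ∈ C, nxt c ≤ d ∧ P = K c} :
      Ordinal.{u} → Set (Submodule R M)) '' C) := by
    ext P
    simp only [hSSdef, Set.sUnion_image, Set.mem_iUnion, Set.mem_insert_iff, Set.mem_setOf_eq,
      exists_prop]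
    constructor
    · rintro (rfl | ⟨c, hcC, rfl⟩)
      · exact ⟨c0, hc0C, Or.inl rfl⟩
      · exact ⟨nxt c, (hnxt_mem c (hCsub hcC)).1, Or.inr ⟨c, hcC, le_rfl, rfl⟩⟩
    · rintro ⟨d, hdC, (rfl | ⟨c, hcC, hle, rfl⟩)⟩
      · exact Or.inl rfl
      · exact Or.inr ⟨c, hcC, rfl⟩
  have hSSdir : DirectedOn (· ⊆ ·)
      ((fun d => insert (Mfil c0) {P | ∃ c ∈ C, nxt c ≤ d ∧ P = K c} :
        Ordinal.{u} → Set (Submodule R M)) '' C) := by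
    rintro _ ⟨d1, hd1, rfl⟩ _ ⟨d2, hd2, rfl⟩
    rcases le_total d1 d2 with h | h
    · exact ⟨_, ⟨d2, hd2, rfl⟩, hSdsub _ _ h, subset_rfl⟩
    · exact ⟨_, ⟨d1, hd1, rfl⟩, subset_rfl, hSdsub _ _ h⟩
  have hSSind : sSupIndep SS := by
    rw [hSSunion]
    refine iSupIndep_sUnion_of_directed hSSdir ?_
    rintro _ ⟨d, hdC, rfl⟩
    exact (main d hdC).1
  have hSStop : sSup SS = ⊤ := by
    apply le_antisymm le_top
    rw [hSSunion, sSup_sUnion, ← hunion]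
    refine iSup_le fun α => ?_
    obtain ⟨β, hβC, hβ⟩ := hCunb α.1 α.2
    refine le_trans (hmono α.1 β hβ (hCsub hβC)) ?_
    refine le_iSup₂_of_le _ ⟨β, hβC, rfl⟩ ?_
    rw [(main β hβC).2]
  -- every member of the family is in Add(X)
  have hSSadd : ∀ P ∈ SS, InAdd R X ↥P := by
    rintro P hP
    rcases hP with rfl | ⟨c, hcC, rfl⟩
    · have hc0o : c0 < κ.ord := hCsub hc0C
      exact inAdd_of_isCompl (hN c0 hc0C)
        (hmono c0 (c0 + 1) (le_self_add) (hsucclt c0 hc0o))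
        (hadd c0 hc0o)
    · have hco : c < κ.ord := hCsub hcC
      have hnC : nxt c ∈ C := (hnxt_mem c hco).1
      have hno : nxt c < κ.ord := hCsub hnC
      have hcompl2 : IsCompl (K c) (Mfil c ⊔ N (nxt c)) := by
        constructor
        · have h1 : Disjoint (K c) (Mfil c) := (hKdisj c hcC).symm
          have h2 : Disjoint (K c ⊔ Mfil c) (N (nxt c)) := by
            rw [sup_comm, hKsup c hcC]
            exact (hN (nxt c) hnC).disjoint
          exact h1.disjoint_sup_right_of_disjoint_sup_left h2
        · rw [codisjoint_iff, ← sup_assoc, sup_comm (K c) (Mfil c), hKsup c hcC]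
          exact (hN (nxt c) hnC).codisjoint.eq_top
      have hle : K c ≤ Mfil (nxt c + 1) :=
        le_trans inf_le_right
          (hmono (nxt c) (nxt c + 1) (le_self_add) (hsucclt _ hno))
      exact inAdd_of_isCompl hcompl2 hle (hadd (nxt c) hno)
  -- conclude
  have hint : DirectSum.IsInternal (fun i : ↥SS => (i : Submodule R M)) := by
    apply DirectSum.isInternal_submodule_of_iSupIndep_of_iSup_eq_top
    · exact (sSupIndep_iff SS).1 hSSind
    · rw [← sSup_eq_iSup']
      exact hSStop
  exact inAdd_directSum _ (fun i => hSSadd i.1 i.2) hint
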